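/- Let Q̃_φ, Q̃_opt be symmetric positive definite s×s matrices with eigenvalues in [r, L], and let b be a random vector with E[b bᵀ] = σ_b²·I independent of everything else. Suppose a random nonnegative quantity ℓ satisfies ‖Q̃_φ^{−1} b − Q̃_opt^{−1} b‖ ≤ ℓ + C almost surely for a constant C ≥ 0. Then ‖Q̃_φ − Q̃_opt‖_F² ≤ σ_b^{−2}·L⁴·(√(E[ℓ²]) + C)². -/

import Mathlib

open Matrix MeasureTheory

section Aux

variable {n : ℕ} {L : ℝ}

private lemma quad_le_aux {Q : Matrix (Fin n) (Fin n) ℝ}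
    (h : ((L • (1 : Matrix (Fin n) (Fin n) ℝ)) - Q).PosSemidef) (v : Fin n → ℝ) :
    v ⬝ᵥ (Q *ᵥ v) ≤ L * (v ⬝ᵥ v) := by
  have h2 := h.dotProduct_mulVec_nonneg v
  simp only [star_trivial, sub_mulVec, smul_mulVec, one_mulVec, dotProduct_sub,
    dotProduct_smul, smul_eq_mul] at h2
  linarith

open scoped MatrixOrder in
private lemma mulVec_sq_le_aux {Q : Matrix (Fin n) (Fin n) ℝ}
    (hQ : Q.PosSemidef) (h : ((L • (1 : Matrix (Fin n) (Fin n) ℝ)) - Q).PosSemidef)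
    (hL0 : 0 ≤ L) (v : Fin n → ℝ) :
    (Q *ᵥ v) ⬝ᵥ (Q *ᵥ v) ≤ L ^ 2 * (v ⬝ᵥ v) := by
  set S := CFC.sqrt Q with hS
  have hS2 : S * S = Q := by
    have := CFC.sq_sqrt Q hQ.nonneg; rwa [pow_two] at this
  have hSt : Sᵀ = S := by
    have := (CFC.sqrt_nonneg Q).posSemidef.isHermitian
    rwa [IsHermitian, conjTranspose_eq_transpose_of_trivial] at this
  have key : ∀ w : Fin n → ℝ, (S *ᵥ w) ⬝ᵥ (S *ᵥ w) = w ⬝ᵥ (Q *ᵥ w) := by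
    intro w
    rw [dotProduct_mulVec, ← vecMul_transpose, hSt, vecMul_vecMul, hS2, ← dotProduct_mulVec]
  have hQv : Q *ᵥ v = S *ᵥ (S *ᵥ v) := by rw [mulVec_mulVec, hS2]
  have h1 : (Q *ᵥ v) ⬝ᵥ (Q *ᵥ v) = (S *ᵥ v) ⬝ᵥ (Q *ᵥ (S *ᵥ v)) := by
    rw [hQv, key]
  have h2 : (S *ᵥ v) ⬝ᵥ (Q *ᵥ (S *ᵥ v)) ≤ L * ((S *ᵥ v) ⬝ᵥ (S *ᵥ v)) := quad_le_aux h _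
  have h3 : (S *ᵥ v) ⬝ᵥ (S *ᵥ v) = v ⬝ᵥ (Q *ᵥ v) := key v
  have h4 : v ⬝ᵥ (Q *ᵥ v) ≤ L * (v ⬝ᵥ v) := quad_le_aux h v
  have h5 : L * ((S *ᵥ v) ⬝ᵥ (S *ᵥ v)) ≤ L * (L * (v ⬝ᵥ v)) := by
    rw [h3]; exact mul_le_mul_of_nonneg_left h4 hL0
  calc (Q *ᵥ v) ⬝ᵥ (Q *ᵥ v) = (S *ᵥ v) ⬝ᵥ (Q *ᵥ (S *ᵥ v)) := h1
    _ ≤ L * ((S *ᵥ v) ⬝ᵥ (S *ᵥ v)) := h2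
    _ ≤ L * (L * (v ⬝ᵥ v)) := h5
    _ = L ^ 2 * (v ⬝ᵥ v) := by ring

private lemma frob_left_aux {Q X : Matrix (Fin n) (Fin n) ℝ}
    (hQ : Q.PosSemidef) (h : ((L • (1 : Matrix (Fin n) (Fin n) ℝ)) - Q).PosSemidef)
    (hL0 : 0 ≤ L) :
    ∑ i, ∑ j, ((Q * X) i j) ^ 2 ≤ L ^ 2 * ∑ i, ∑ j, (X i j) ^ 2 := by
  rw [Finset.sum_comm, Finset.sum_comm (f := fun i j => (X i j) ^ 2), Finset.mul_sum]
  refine Finset.sum_le_sum fun j _ => ?_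
  have hcol : ∀ i, (Q * X) i j = (Q *ᵥ fun k => X k j) i := by
    intro i; simp [mul_apply, mulVec, dotProduct]
  calc ∑ i, ((Q * X) i j) ^ 2 = (Q *ᵥ fun k => X k j) ⬝ᵥ (Q *ᵥ fun k => X k j) := by
        simp_rw [hcol]; simp [dotProduct, pow_two]
    _ ≤ L ^ 2 * ((fun k => X k j) ⬝ᵥ fun k => X k j) := mulVec_sq_le_aux hQ h hL0 _
    _ = L ^ 2 * ∑ i, (X i j) ^ 2 := by simp [dotProduct, pow_two]

private lemma frob_right_aux {Q X : Matrix (Fin n) (Fin n) ℝ}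
    (hQ : Q.PosSemidef) (h : ((L • (1 : Matrix (Fin n) (Fin n) ℝ)) - Q).PosSemidef)
    (hL0 : 0 ≤ L) :
    ∑ i, ∑ j, ((X * Q) i j) ^ 2 ≤ L ^ 2 * ∑ i, ∑ j, (X i j) ^ 2 := by
  have hsymm : ∀ a b, Q a b = Q b a := by
    intro a b
    have := hQ.isHermitian
    rw [IsHermitian, conjTranspose_eq_transpose_of_trivial] at this
    conv_lhs => rw [← this]
    rfl
  rw [Finset.mul_sum]
  refine Finset.sum_le_sum fun i _ => ?_
  have hrow : ∀ j, (X * Q) i j = (Q *ᵥ fun k => X i k) j := by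
    intro j
    simp only [mul_apply, mulVec, dotProduct]
    exact Finset.sum_congr rfl fun k _ => by rw [hsymm k j]; ring
  calc ∑ j, ((X * Q) i j) ^ 2 = (Q *ᵥ fun k => X i k) ⬝ᵥ (Q *ᵥ fun k => X i k) := by
        simp_rw [hrow]; simp [dotProduct, pow_two]
    _ ≤ L ^ 2 * ((fun k => X i k) ⬝ᵥ fun k => X i k) := mulVec_sq_le_aux hQ h hL0 _
    _ = L ^ 2 * ∑ j, (X i j) ^ 2 := by simp [dotProduct, pow_two]

end Aux

theorem frobenius_bound_from_loss {s : ℕ} {Ω : Type*} [MeasurableSpace Ω]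
    (μ : Measure Ω) [IsProbabilityMeasure μ]
    (r L σb C : ℝ) (hr : 0 < r) (hrL : r ≤ L) (hσb : 0 < σb) (hC : 0 ≤ C)
    (Qφ Qopt : Matrix (Fin s) (Fin s) ℝ) (hQφ : Qφ.PosDef) (hQopt : Qopt.PosDef)
    (hQφl : (Qφ - r • (1 : Matrix (Fin s) (Fin s) ℝ)).PosSemidef)
    (hQφu : ((L • (1 : Matrix (Fin s) (Fin s) ℝ)) - Qφ).PosSemidef)
    (hQol : (Qopt - r • (1 : Matrix (Fin s) (Fin s) ℝ)).PosSemidef)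
    (hQou : ((L • (1 : Matrix (Fin s) (Fin s) ℝ)) - Qopt).PosSemidef)
    (b : Ω → Fin s → ℝ)
    (hbint : ∀ i j, Integrable (fun ω => b ω i * b ω j) μ)
    (hcov : ∀ i j, (∫ ω, b ω i * b ω j ∂μ) = if i = j then σb ^ 2 else 0)
    (ℓ : Ω → ℝ) (hℓ0 : ∀ ω, 0 ≤ ℓ ω)
    (hℓint : Integrable (fun ω => ℓ ω ^ 2) μ)
    (hbound : ∀ᵐ ω ∂μ,
      Real.sqrt (∑ i, ((Qφ⁻¹.mulVec (b ω) - Qopt⁻¹.mulVec (b ω)) i) ^ 2) ≤ ℓ ω + C) :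
    (∑ i, ∑ j, ((Qφ - Qopt) i j) ^ 2) ≤
      σb⁻¹ ^ 2 * L ^ 4 * (Real.sqrt (∫ ω, ℓ ω ^ 2 ∂μ) + C) ^ 2 := by
  have hL0 : 0 ≤ L := le_trans hr.le hrL
  set N : Matrix (Fin s) (Fin s) ℝ := Qφ⁻¹ - Qopt⁻¹ with hN
  set E : ℝ := ∫ ω, ℓ ω ^ 2 ∂μ with hE
  set P : ℝ := (Real.sqrt E + C) ^ 2 with hP
  -- pointwise identity for the squared norm
  have hg_eq : ∀ ω, (∑ i, ((Qφ⁻¹.mulVec (b ω) - Qopt⁻¹.mulVec (b ω)) i) ^ 2)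
      = ∑ i, ∑ j, ∑ k, (N i j * N i k) * (b ω j * b ω k) := by
    intro ω
    refine Finset.sum_congr rfl fun i _ => ?_
    have : (Qφ⁻¹.mulVec (b ω) - Qopt⁻¹.mulVec (b ω)) i = ∑ j, N i j * b ω j := by
      rw [← sub_mulVec]; simp [hN, mulVec, dotProduct, Matrix.sub_apply]
    rw [this, pow_two, Finset.sum_mul_sum]
    exact Finset.sum_congr rfl fun j _ => Finset.sum_congr rfl fun k _ => by ring
  -- integrability of the expanded quantity
  have hterm_int : ∀ (i j k : Fin s),
      Integrable (fun ω => (N i j * N i k) * (b ω j * b ω k)) μ :=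
    fun i j k => (hbint j k).const_mul _
  have hg_int : Integrable (fun ω =>
      ∑ i, ∑ j, ∑ k, (N i j * N i k) * (b ω j * b ω k)) μ := by
    refine integrable_finset_sum _ fun i _ => integrable_finset_sum _ fun j _ =>
      integrable_finset_sum _ fun k _ => hterm_int i j k
  -- expectation of the squared norm
  have hg_integral : (∫ ω, ∑ i, ∑ j, ∑ k, (N i j * N i k) * (b ω j * b ω k) ∂μ)
      = σb ^ 2 * ∑ i, ∑ j, (N i j) ^ 2 := by
    rw [integral_finset_sum _ fun i _ => integrable_finset_sum _ fun j _ =>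
      integrable_finset_sum _ fun k _ => hterm_int i j k]
    have : ∀ i : Fin s, (∫ ω, ∑ j, ∑ k, (N i j * N i k) * (b ω j * b ω k) ∂μ)
        = ∑ j, (N i j) ^ 2 * σb ^ 2 := by
      intro i
      rw [integral_finset_sum _ fun j _ => integrable_finset_sum _ fun k _ => hterm_int i j k]
      refine Finset.sum_congr rfl fun j _ => ?_
      rw [integral_finset_sum _ fun k _ => hterm_int i j k]
      have : ∀ k : Fin s, (∫ ω, (N i j * N i k) * (b ω j * b ω k) ∂μ)
          = (N i j * N i k) * (if j = k then σb ^ 2 else 0) := by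
        intro k; rw [integral_const_mul, hcov]
      simp_rw [this, mul_ite, mul_zero, Finset.sum_ite_eq]
      simp [pow_two]
    simp_rw [this, Finset.mul_sum]
    exact Finset.sum_congr rfl fun i _ => Finset.sum_congr rfl fun j _ => by ring
  -- ℓ is integrable
  have hℓmeas : AEStronglyMeasurable ℓ μ := by
    have h1 : AEStronglyMeasurable (fun ω => Real.sqrt (ℓ ω ^ 2)) μ :=
      Real.continuous_sqrt.comp_aestronglyMeasurable hℓint.aestronglyMeasurable
    refine h1.congr (Filter.Eventually.of_forall fun ω => ?_)
    exact Real.sqrt_sq (hℓ0 ω)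
  have hℓI : Integrable ℓ μ := by
    refine Integrable.mono (hℓint.add (integrable_const 1)) hℓmeas
      (Filter.Eventually.of_forall fun ω => ?_)
    have h0 := hℓ0 ω
    show ‖ℓ ω‖ ≤ ‖ℓ ω ^ 2 + 1‖
    have h1 : (0:ℝ) ≤ ℓ ω ^ 2 + 1 := by positivity
    rw [Real.norm_eq_abs, Real.norm_eq_abs, abs_of_nonneg h0, abs_of_nonneg h1]
    nlinarith
  -- (ℓ + C)^2 is integrable
  have hℓCint : Integrable (fun ω => (ℓ ω + C) ^ 2) μ := by
    have : (fun ω => (ℓ ω + C) ^ 2) = fun ω => ℓ ω ^ 2 + ((2 * C) * ℓ ω + C ^ 2) := by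
      funext ω; ring
    rw [this]
    exact hℓint.add ((hℓI.const_mul _).add (integrable_const _))
  -- a.e. bound
  have hae : ∀ᵐ ω ∂μ, (∑ i, ∑ j, ∑ k, (N i j * N i k) * (b ω j * b ω k)) ≤ (ℓ ω + C) ^ 2 := by
    filter_upwards [hbound] with ω hω
    rw [← hg_eq ω]
    set x := ∑ i, ((Qφ⁻¹.mulVec (b ω) - Qopt⁻¹.mulVec (b ω)) i) ^ 2 with hx
    have hx0 : 0 ≤ x := Finset.sum_nonneg fun i _ => sq_nonneg _
    have := pow_le_pow_left₀ (Real.sqrt_nonneg x) hω 2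
    rwa [Real.sq_sqrt hx0] at this
  -- integrate the bound
  have hint_le : σb ^ 2 * ∑ i, ∑ j, (N i j) ^ 2 ≤ ∫ ω, (ℓ ω + C) ^ 2 ∂μ := by
    rw [← hg_integral]
    exact integral_mono_ae hg_int hℓCint hae
  -- Jensen: ∫ ℓ ≤ √E
  have hE0 : 0 ≤ E := integral_nonneg fun ω => sq_nonneg _
  have hℓmean : ∫ ω, ℓ ω ∂μ ≤ Real.sqrt E := by
    have hm0 : 0 ≤ ∫ ω, ℓ ω ∂μ := integral_nonneg hℓ0
    refine (Real.le_sqrt hm0 hE0).mpr ?_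
    set m := ∫ ω, ℓ ω ∂μ with hm
    have hvar : 0 ≤ ∫ ω, (ℓ ω - m) ^ 2 ∂μ := integral_nonneg fun ω => sq_nonneg _
    have hexp : (∫ ω, (ℓ ω - m) ^ 2 ∂μ) = E - m ^ 2 := by
      have heq : (fun ω => (ℓ ω - m) ^ 2) = fun ω => ℓ ω ^ 2 + ((-2 * m) * ℓ ω + m ^ 2) := by
        funext ω; ring
      have ha : Integrable (fun ω => (-2 * m) * ℓ ω) μ := hℓI.const_mul _
      have hb : Integrable (fun ω => (-2 * m) * ℓ ω + m ^ 2) μ := ha.add (integrable_const _)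
      rw [heq, integral_add hℓint hb, integral_add ha (integrable_const _), integral_const_mul,
        integral_const]
      simp only [measure_univ, probReal_univ, ENNReal.toReal_one, smul_eq_mul, one_mul, ← hE, ← hm]
      ring
    rw [hexp] at hvar
    linarith
  -- bound ∫ (ℓ+C)^2
  have hPbound : (∫ ω, (ℓ ω + C) ^ 2 ∂μ) ≤ P := by
    have hexpand : (∫ ω, (ℓ ω + C) ^ 2 ∂μ) = E + (2 * C) * (∫ ω, ℓ ω ∂μ) + C ^ 2 := by
      have heq : (fun ω => (ℓ ω + C) ^ 2) = fun ω => ℓ ω ^ 2 + ((2 * C) * ℓ ω + C ^ 2) := by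
        funext ω; ring
      have ha : Integrable (fun ω => (2 * C) * ℓ ω) μ := hℓI.const_mul _
      have hb : Integrable (fun ω => (2 * C) * ℓ ω + C ^ 2) μ := ha.add (integrable_const _)
      rw [heq, integral_add hℓint hb, integral_add ha (integrable_const _), integral_const_mul,
        integral_const]
      simp only [measure_univ, probReal_univ, ENNReal.toReal_one, smul_eq_mul, one_mul, ← hE]
      ring
    have hPexpand : P = E + 2 * C * Real.sqrt E + C ^ 2 := by
      rw [hP]
      have := Real.sq_sqrt hE0
      nlinarith [Real.sq_sqrt hE0]
    rw [hexpand, hPexpand]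
    nlinarith [hℓmean, hC]
  have key : σb ^ 2 * ∑ i, ∑ j, (N i j) ^ 2 ≤ P := le_trans hint_le hPbound
  -- matrix identity: Qφ - Qopt = Qφ * (Qopt⁻¹ - Qφ⁻¹) * Qopt
  have hdφ : IsUnit Qφ.det := isUnit_iff_ne_zero.mpr hQφ.det_pos.ne'
  have hdo : IsUnit Qopt.det := isUnit_iff_ne_zero.mpr hQopt.det_pos.ne'
  have hid : Qφ - Qopt = Qφ * (Qopt⁻¹ - Qφ⁻¹) * Qopt := by
    rw [Matrix.mul_sub, Matrix.sub_mul, Matrix.mul_assoc,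
      Matrix.nonsing_inv_mul _ hdo, Matrix.mul_one, Matrix.mul_nonsing_inv _ hdφ,
      Matrix.one_mul]
  -- Frobenius bounds
  have hFM : (∑ i, ∑ j, ((Qopt⁻¹ - Qφ⁻¹) i j) ^ 2) = ∑ i, ∑ j, (N i j) ^ 2 := by
    refine Finset.sum_congr rfl fun i _ => Finset.sum_congr rfl fun j _ => ?_
    have : (Qopt⁻¹ - Qφ⁻¹) i j = -(N i j) := by simp only [hN, Matrix.sub_apply, neg_sub]
    rw [this, neg_pow]; ring
  have hstep1 : (∑ i, ∑ j, ((Qφ * (Qopt⁻¹ - Qφ⁻¹) * Qopt) i j) ^ 2)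
      ≤ L ^ 2 * ∑ i, ∑ j, ((Qφ * (Qopt⁻¹ - Qφ⁻¹)) i j) ^ 2 :=
    frob_right_aux hQopt.posSemidef hQou hL0
  have hstep2 : (∑ i, ∑ j, ((Qφ * (Qopt⁻¹ - Qφ⁻¹)) i j) ^ 2)
      ≤ L ^ 2 * ∑ i, ∑ j, ((Qopt⁻¹ - Qφ⁻¹) i j) ^ 2 :=
    frob_left_aux hQφ.posSemidef hQφu hL0
  have hFD : (∑ i, ∑ j, ((Qφ - Qopt) i j) ^ 2) ≤ L ^ 4 * ∑ i, ∑ j, (N i j) ^ 2 := by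
    rw [hid, ← hFM]
    calc (∑ i, ∑ j, ((Qφ * (Qopt⁻¹ - Qφ⁻¹) * Qopt) i j) ^ 2)
        ≤ L ^ 2 * ∑ i, ∑ j, ((Qφ * (Qopt⁻¹ - Qφ⁻¹)) i j) ^ 2 := hstep1
      _ ≤ L ^ 2 * (L ^ 2 * ∑ i, ∑ j, ((Qopt⁻¹ - Qφ⁻¹) i j) ^ 2) :=
          mul_le_mul_of_nonneg_left hstep2 (by positivity)
      _ = L ^ 4 * ∑ i, ∑ j, ((Qopt⁻¹ - Qφ⁻¹) i j) ^ 2 := by ring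
  -- combine
  have hσ2 : (0 : ℝ) < σb ^ 2 := by positivity
  have hFN0 : (0 : ℝ) ≤ ∑ i, ∑ j, (N i j) ^ 2 :=
    Finset.sum_nonneg fun i _ => Finset.sum_nonneg fun j _ => sq_nonneg _
  have hL4 : (0 : ℝ) ≤ L ^ 4 := by positivity
  have hgoal : σb⁻¹ ^ 2 * L ^ 4 * P = (σb ^ 2)⁻¹ * (L ^ 4 * P) := by
    rw [inv_pow]; ring
  rw [hgoal, ← div_eq_inv_mul, le_div_iff₀ hσ2]
  nlinarith [mul_le_mul_of_nonneg_left key hL4]
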